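/- arXiv:1703.07507 — 3 statements merged into one kernel-verified Lean document; each statement's English description precedes it below -/
import Mathlib

section
/- For integers d ≥ 1 and m ≥ 1, q^{binomial(m,2)} * (1-q^m)/(1-q^d) * qbinom(2d, d+m) = q^{binomial(m,2)} * qbinom(2d-1, d-m) - q^{binomial(m+1,2)} * qbinom(2d-1, d-m-1), as an identity of rational functions (or formal power series) in q. -/
open Finset

/-- `(q;q)_n = ∏_{i=1}^n (1 - q^i)` as a formal power series over `ℚ`. -/
noncomputable def qp (n : ℕ) : PowerSeries ℚ :=
  ∏ i ∈ Finset.range n, (1 - (PowerSeries.X : PowerSeries ℚ) ^ (i + 1))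

/-- The Gaussian binomial coefficient `qbinom(n, k)` with integer lower index:
`(q;q)_n / ((q;q)_k (q;q)_{n-k})` if `0 ≤ k ≤ n`, and `0` otherwise. -/
noncomputable def qbinZ (n : ℕ) (k : ℤ) : PowerSeries ℚ :=
  if 0 ≤ k ∧ k ≤ (n : ℤ) then qp n * (qp k.toNat * qp (n - k.toNat))⁻¹ else 0

open PowerSeries in
lemma cc_qp (n : ℕ) : PowerSeries.constantCoeff (R := ℚ) (qp n) = 1 := by
  simp [qp, map_prod]

lemma qp_zero : qp 0 = 1 := by simp [qp]

lemma qp_succ (n : ℕ) : qp (n + 1) = qp n * (1 - PowerSeries.X ^ (n + 1)) :=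
  Finset.prod_range_succ _ _

open PowerSeries in
lemma cc_one_sub (n : ℕ) (hn : 1 ≤ n) :
    PowerSeries.constantCoeff (R := ℚ) (1 - PowerSeries.X ^ n) = 1 := by
  have : n ≠ 0 := by omega
  simp [this]

open PowerSeries in
lemma inv_eq_mul_inv {a b c : PowerSeries ℚ} (ha : constantCoeff (R := ℚ) a ≠ 0)
    (hc : constantCoeff (R := ℚ) c ≠ 0) (h : a * b = c) : a⁻¹ = b * c⁻¹ := by
  calc a⁻¹ = a⁻¹ * (c * c⁻¹) := by rw [PowerSeries.mul_inv_cancel _ hc, mul_one]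
  _ = (a⁻¹ * a) * (b * c⁻¹) := by rw [← h]; ring
  _ = b * c⁻¹ := by rw [PowerSeries.inv_mul_cancel _ ha, one_mul]

lemma qbinZ_eq (n : ℕ) (k : ℤ) (a b : ℕ) (h1 : k = a) (h2 : (n : ℤ) = a + b) :
    qbinZ n k = qp n * (qp a * qp b)⁻¹ := by
  rw [qbinZ, if_pos ⟨by omega, by omega⟩]
  have e1 : k.toNat = a := by omega
  rw [e1]
  have e2 : n - a = b := by omega
  rw [e2]

lemma qbinZ_zero (n : ℕ) (k : ℤ) (h : ¬(0 ≤ k ∧ k ≤ (n : ℤ))) : qbinZ n k = 0 := by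
  rw [qbinZ, if_neg h]

/-- `q^{C(m,2)} (1-q^m)/(1-q^d) qbinom(2d, d+m)
      = q^{C(m,2)} qbinom(2d-1, d-m) - q^{C(m+1,2)} qbinom(2d-1, d-m-1)`. -/
theorem stmt_0 (d m : ℕ) (hd : 1 ≤ d) (hm : 1 ≤ m) :
    (PowerSeries.X : PowerSeries ℚ) ^ (m.choose 2) * (1 - PowerSeries.X ^ m)
        * (1 - PowerSeries.X ^ d)⁻¹ * qbinZ (2 * d) (d + m)
      = PowerSeries.X ^ (m.choose 2) * qbinZ (2 * d - 1) ((d : ℤ) - m)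
        - PowerSeries.X ^ ((m + 1).choose 2) * qbinZ (2 * d - 1) ((d : ℤ) - m - 1) := by
  have hchoose : (m + 1).choose 2 = m.choose 2 + m := by
    rw [Nat.choose_succ_succ]
    simp [Nat.choose_one_right, Nat.add_comm]
  rcases lt_trichotomy m d with hlt | heq | hgt
  · -- m < d
    obtain ⟨c, rfl⟩ : ∃ c, d = m + c + 1 := ⟨d - m - 1, by omega⟩
    set X : PowerSeries ℚ := PowerSeries.X
    rw [show 2 * (m + c + 1) = 2 * m + 2 * c + 2 by ring,
        show 2 * m + 2 * c + 2 - 1 = 2 * m + 2 * c + 1 by omega]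
    have hone : PowerSeries.constantCoeff (R := ℚ) (1 - X ^ (m + c + 1)) ≠ 0 := by
      rw [cc_one_sub _ (by omega)]; norm_num
    rw [qbinZ_eq (2 * m + 2 * c + 2) _ (2 * m + c + 1) (c + 1)
          (by push_cast; omega) (by push_cast; omega),
        qbinZ_eq (2 * m + 2 * c + 1) _ (c + 1) (2 * m + c)
          (by push_cast; omega) (by push_cast; omega),
        qbinZ_eq (2 * m + 2 * c + 1) _ c (2 * m + c + 1)
          (by push_cast; omega) (by push_cast; omega)]
    have hB : (qp (c + 1) * qp (2 * m + c))⁻¹ =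
        (1 - X ^ (2 * m + c + 1)) * (qp (2 * m + c + 1) * qp (c + 1))⁻¹ := by
      apply inv_eq_mul_inv (by simp [map_mul, cc_qp]) (by simp [map_mul, cc_qp])
      rw [show 2 * m + c + 1 = (2 * m + c) + 1 by ring, qp_succ (2 * m + c)]; ring
    have hC : (qp c * qp (2 * m + c + 1))⁻¹ =
        (1 - X ^ (c + 1)) * (qp (2 * m + c + 1) * qp (c + 1))⁻¹ := by
      apply inv_eq_mul_inv (by simp [map_mul, cc_qp]) (by simp [map_mul, cc_qp])
      rw [qp_succ c]; ring
    rw [hB, hC, hchoose]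
    have hqp2d : qp (2 * m + 2 * c + 2) =
        qp (2 * m + 2 * c + 1) * ((1 - X ^ (m + c + 1)) * (1 + X ^ (m + c + 1))) := by
      rw [show 2 * m + 2 * c + 2 = (2 * m + 2 * c + 1) + 1 by ring, qp_succ]
      congr 1
      have e2 : X ^ (2 * m + 2 * c + 1 + 1) = X ^ (m + c + 1) * X ^ (m + c + 1) := by
        rw [← pow_add]; congr 1; omega
      rw [e2]; ring
    have hinv : (1 - X ^ (m + c + 1))⁻¹ * (1 - X ^ (m + c + 1)) = 1 :=
      PowerSeries.inv_mul_cancel _ hone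
    set P : PowerSeries ℚ := (qp (2 * m + c + 1) * qp (c + 1))⁻¹ with hP
    set Q : PowerSeries ℚ := qp (2 * m + 2 * c + 1) with hQ
    linear_combination (X ^ (m.choose 2) * (1 - X ^ m) * (1 - X ^ (m + c + 1))⁻¹ * P) * hqp2d
      + (X ^ (m.choose 2) * (1 - X ^ m) * Q * (1 + X ^ (m + c + 1)) * P) * hinv
  · -- m = d
    subst heq
    rw [qbinZ_eq (2 * m) _ (2 * m) 0 (by push_cast; omega) (by omega),
        qbinZ_eq (2 * m - 1) _ 0 (2 * m - 1) (by omega) (by omega),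
        qbinZ_zero (2 * m - 1) _ (by push_cast; omega)]
    rw [qp_zero, mul_one, one_mul,
        PowerSeries.mul_inv_cancel _ (show PowerSeries.constantCoeff (R := ℚ) (qp (2 * m)) ≠ 0 by
          rw [cc_qp]; norm_num),
        PowerSeries.mul_inv_cancel _ (show PowerSeries.constantCoeff (R := ℚ) (qp (2 * m - 1)) ≠ 0 by
          rw [cc_qp]; norm_num)]
    have hinv : (1 - (PowerSeries.X : PowerSeries ℚ) ^ m)⁻¹ *
        (1 - PowerSeries.X ^ m) = 1 :=
      PowerSeries.inv_mul_cancel _ (by rw [cc_one_sub _ hm]; norm_num)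
    linear_combination (PowerSeries.X : PowerSeries ℚ) ^ (m.choose 2) * hinv
  · -- m > d
    rw [qbinZ_zero (2 * d) _ (by push_cast; omega),
        qbinZ_zero (2 * d - 1) ((d : ℤ) - m) (by push_cast; omega),
        qbinZ_zero (2 * d - 1) ((d : ℤ) - m - 1) (by push_cast; omega)]
    ring
end

section
/- Let b ≥ 1 and let w be the permutation of {1,...,2b} associated with a linear extension of the poset 2 × b under the natural labeling ν(i,j) = j + (i-1)b. If k is a descent position of w (i.e., w_k > w_{k+1}), then w_k > b and w_{k+1} ≤ b. -/
open Finset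

/-- Let `σ` be a linear extension of the poset `2 × b`, and `w` the associated
permutation of `{1,…,2b}` via the natural labeling `ν(i,j) = j + (i-1)b`
(`0`-indexed: `ν(i,j) = (j+1) + i·b`).  If `k` is a descent position of `w`
(`w_k > w_{k+1}`), then `w_k > b` and `w_{k+1} ≤ b`. -/
theorem stmt_7 (b : ℕ) (hb : 1 ≤ b) (σ : Fin 2 × Fin b ≃ Fin (2 * b))
    (hσ : ∀ x y : Fin 2 × Fin b, x ≤ y → σ x ≤ σ y)
    (w : Fin (2 * b) → ℕ)
    (hw : ∀ i : Fin (2 * b), w i = ((σ.symm i).2 : ℕ) + 1 + ((σ.symm i).1 : ℕ) * b)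
    (k : ℕ) (hk : k + 1 < 2 * b)
    (hdes : w ⟨k + 1, hk⟩ < w ⟨k, by omega⟩) :
    b < w ⟨k, by omega⟩ ∧ w ⟨k + 1, hk⟩ ≤ b := by
  set x := σ.symm ⟨k, by omega⟩ with hx
  set y := σ.symm ⟨k + 1, hk⟩ with hy
  have hwx := hw ⟨k, by omega⟩
  have hwy := hw ⟨k + 1, hk⟩
  rw [← hx] at hwx
  rw [← hy] at hwy
  have hx1 : (x.1 : ℕ) < 2 := x.1.isLt
  have hy1 : (y.1 : ℕ) < 2 := y.1.isLt
  have hx2 : (x.2 : ℕ) < b := x.2.isLt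
  have hy2 : (y.2 : ℕ) < b := y.2.isLt
  have hne : (x.1 : ℕ) ≠ (y.1 : ℕ) := by
    intro h
    have h1 : y.1 ≤ x.1 := le_of_eq (Fin.ext h.symm)
    have h2 : y.2 ≤ x.2 := by
      rw [Fin.le_def]
      rw [hwx, hwy] at hdes
      rcases (by omega : (x.1:ℕ) = 0 ∨ (x.1:ℕ) = 1) with h' | h' <;>
        rcases (by omega : (y.1:ℕ) = 0 ∨ (y.1:ℕ) = 1) with h'' | h'' <;>
        rw [h', h''] at hdes <;> omega
    have hle : y ≤ x := ⟨h1, h2⟩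
    have := hσ y x hle
    rw [hx, hy, Equiv.apply_symm_apply, Equiv.apply_symm_apply, Fin.mk_le_mk] at this
    omega
  rw [hwx, hwy] at hdes ⊢
  rcases (by omega : (x.1:ℕ) = 0 ∨ (x.1:ℕ) = 1) with h' | h' <;>
    rcases (by omega : (y.1:ℕ) = 0 ∨ (y.1:ℕ) = 1) with h'' | h'' <;>
    rw [h', h''] at hdes hne ⊢ <;> omega
end

section
/- For each m ≥ 1, the following identity of formal power series in q holds: (1/(q;q)_∞) * Σ_{l=0}^{m-1} (-1)^l q^{l(3l+1)/2} (1 - q^{2l+1}) = 1 + (-1)^{m-1} Σ_{d=1}^∞ q^{d²+d+binomial(m,2)} / (q;q)_{2d} * (1-q^m)/(1-q^d) * qbinom(2d, d+m). -/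
open Finset

/-- The Gaussian binomial coefficient `qbinom(n,k)`. -/
noncomputable def qbin (n k : ℕ) : PowerSeries ℚ :=
  if k ≤ n then qp n * (qp k * qp (n - k))⁻¹ else 0

/-- `(q;q)_∞ = ∏_{i=1}^∞ (1 - q^i)`, defined coefficientwise: its `n`-th coefficient
agrees with that of `(q;q)_n`, since the omitted factors are `1 + O(q^{n+1})`. -/
noncomputable def qpInf : PowerSeries ℚ :=
  PowerSeries.mk fun n => PowerSeries.coeff n (qp n)

/-- The sum `Σ_{d=0}^∞ f d` of a sequence of power series in which the order of
`f d` tends to infinity (indeed `f d = O(q^d)` in our applications), defined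
coefficientwise via truncation. -/
noncomputable def seriesSum (f : ℕ → PowerSeries ℚ) : PowerSeries ℚ :=
  PowerSeries.mk fun n => PowerSeries.coeff n (∑ d ∈ Finset.range (n + 1), f d)

namespace AM

open PowerSeries

local notation "QQ" => PowerSeries ℚ
local notation "cc" => (constantCoeff : QQ →+* ℚ)

lemma qp_zero : qp 0 = 1 := by simp [qp]

lemma qp_succ (n : ℕ) : qp (n+1) = qp n * (1 - X ^ (n+1)) := by
  simp [qp, Finset.prod_range_succ]

lemma cc_one_sub_pow (n : ℕ) : cc (1 - (X:QQ) ^ (n+1)) = 1 := by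
  simp

lemma cc_qp (n : ℕ) : cc (qp n) = 1 := by
  induction n with
  | zero => simp [qp_zero]
  | succ n ih => rw [qp_succ, map_mul, ih, cc_one_sub_pow]; ring

lemma qp_mul_inv (n : ℕ) : qp n * (qp n)⁻¹ = 1 :=
  PowerSeries.mul_inv_cancel _ (by rw [cc_qp]; norm_num)

lemma osp_mul_inv (n : ℕ) : (1 - (X:QQ)^(n+1)) * (1 - (X:QQ)^(n+1))⁻¹ = 1 :=
  PowerSeries.mul_inv_cancel _ (by rw [cc_one_sub_pow]; norm_num)

/-- cancel a factor with nonzero constant coefficient -/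
lemma cancel {u a b : QQ} (hu : u * u⁻¹ = 1) (h : a * u = b * u) : a = b := by
  have := congrArg (· * u⁻¹) h
  simpa [mul_assoc, hu] using this

lemma qbin_of_le {n k : ℕ} (h : k ≤ n) : qbin n k = qp n * (qp k * qp (n-k))⁻¹ := if_pos h

lemma qbin_of_gt {n k : ℕ} (h : n < k) : qbin n k = 0 := if_neg (by omega)

lemma qbin_mul {n k : ℕ} (h : k ≤ n) : qbin n k * (qp k * qp (n-k)) = qp n := by
  rw [qbin_of_le h, mul_assoc]
  have : (qp k * qp (n-k)) * (qp k * qp (n-k))⁻¹ = 1 :=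
    PowerSeries.mul_inv_cancel _ (by rw [map_mul, cc_qp, cc_qp]; norm_num)
  rw [mul_comm ((qp k * qp (n-k))⁻¹), this, mul_one]

lemma qbin_zero (n : ℕ) : qbin n 0 = 1 := by
  have h := qbin_mul (Nat.zero_le n)
  simp only [Nat.sub_zero, qp_zero, one_mul] at h
  exact cancel (qp_mul_inv n) (by rw [h, one_mul])

lemma qbin_self (n : ℕ) : qbin n n = 1 := by
  have h := qbin_mul (le_refl n)
  simp only [Nat.sub_self, qp_zero, mul_one] at h
  exact cancel (qp_mul_inv n) (by rw [h, one_mul])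

/-- Pascal: qbin (n+1) (j+1) = qbin n (j+1) + X^(n-j) * qbin n j, for all j n. -/
lemma pascal (n j : ℕ) : qbin (n+1) (j+1) = qbin n (j+1) + X^(n-j) * qbin n j := by
  rcases lt_or_ge n (j+1) with hnj | hnj
  · -- j ≥ n : cases j = n (both sides 1) or j > n (both sides 0)
    rcases Nat.lt_or_ge n (j+1-1+1) with _ | _
    rcases eq_or_lt_of_le (Nat.lt_succ_iff.mp hnj) with rfl | hlt
    · rw [qbin_self, qbin_of_gt (by omega), qbin_self, Nat.sub_self]
      ring
    · rw [qbin_of_gt (by omega), qbin_of_gt (by omega), qbin_of_gt (by omega)]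
      ring
    · omega
  · -- j+1 ≤ n
    have h1 : j + 1 ≤ n + 1 := by omega
    have e0 : n + 1 - (j+1) = n - j := by omega
    have e2 : n - j = n - (j+1) + 1 := by omega
    have expand : qp (n-j) = qp (n-(j+1)) * (1 - X^(n-j)) := by
      rw [e2, qp_succ, ← e2]
    have hA : qbin n (j+1) * (qp (j+1) * qp (n+1-(j+1))) = qp n * (1 - X^(n-j)) := by
      rw [e0, expand, show qbin n (j+1) * (qp (j+1) * (qp (n-(j+1)) * (1 - X^(n-j))))
          = qbin n (j+1) * (qp (j+1) * qp (n-(j+1))) * (1 - X^(n-j)) from by ring,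
        qbin_mul hnj]
    have hB : (X^(n-j) * qbin n j) * (qp (j+1) * qp (n+1-(j+1)))
        = qp n * (X^(n-j) - X^(n+1)) := by
      rw [e0, qp_succ j, show (X^(n-j) * qbin n j) * (qp j * (1 - X^(j+1)) * qp (n-j))
          = (qbin n j * (qp j * qp (n-j))) * (X^(n-j) * (1 - X^(j+1))) from by ring,
        qbin_mul (by omega : j ≤ n)]
      have hx : (X:QQ)^(n-j) * X^(j+1) = X^(n+1) := by
        rw [← pow_add]; congr 1; omega
      rw [mul_sub, mul_one, hx, mul_sub]
    have key : (qbin n (j+1) + X^(n-j) * qbin n j) * (qp (j+1) * qp (n+1-(j+1))) = qp (n+1) := by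
      rw [add_mul, hA, hB, qp_succ]; ring
    have key' : qbin (n+1) (j+1) * (qp (j+1) * qp (n+1-(j+1))) = qp (n+1) := qbin_mul h1
    exact cancel (PowerSeries.mul_inv_cancel _ (by rw [map_mul, cc_qp, cc_qp]; norm_num))
      (key'.trans key.symm)

/-- q-Vandermonde: for k ≤ M,
`qbin (M+N) k = Σ_{j=0}^{k} X^(j(M-k+j)) qbin M (k-j) qbin N j`. -/
lemma vandermonde : ∀ (N M k : ℕ), k ≤ M →
    qbin (M+N) k = ∑ j ∈ Finset.range (k+1),
      X^(j*(M-k+j)) * (qbin M (k-j) * qbin N j) := by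
  intro N
  induction N with
  | zero =>
    intro M k hk
    rw [Finset.sum_eq_single 0]
    · simp [qbin_zero]
    · intro j _ hj
      rw [show qbin 0 j = 0 from qbin_of_gt (by omega)]; ring
    · intro h; exact absurd (Finset.mem_range.mpr (by omega)) h
  | succ N ih =>
    intro M k hk
    rcases k with _ | c
    · simp [qbin_zero]
    · have hc : c + 1 ≤ M := hk
      symm
      calc ∑ j ∈ Finset.range (c+1+1), X^(j*(M-(c+1)+j)) * (qbin M ((c+1)-j) * qbin (N+1) j)
          = (∑ i ∈ Finset.range (c+1), X^((i+1)*(M-(c+1)+(i+1)))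
              * (qbin M ((c+1)-(i+1)) * qbin (N+1) (i+1)))
            + X^(0*(M-(c+1)+0)) * (qbin M ((c+1)-0) * qbin (N+1) 0) :=
            Finset.sum_range_succ' _ _
        _ = (∑ i ∈ Finset.range (c+1),
              (X^((i+1)*(M-(c+1)+(i+1))) * (qbin M ((c+1)-(i+1)) * qbin N (i+1))
               + X^(M+N-c) * (X^(i*(M-c+i)) * (qbin M (c-i) * qbin N i))))
            + X^(0*(M-(c+1)+0)) * (qbin M ((c+1)-0) * qbin N 0) := by
            rw [qbin_zero, qbin_zero]
            congr 1
            refine Finset.sum_congr rfl ?_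
            intro i hi
            rcases le_or_gt i N with hiN | hiN
            · have hp : M - c + i = M - (c+1) + (i+1) := by omega
              have h2 : (M - (c+1) + (i+1)) + (N - i) = M + N - c := by omega
              have hexp : (i+1)*(M-(c+1)+(i+1)) + (N-i) = (M+N-c) + i*(M-c+i) := by
                rw [hp]
                calc (i+1)*(M-(c+1)+(i+1)) + (N-i)
                    = i*(M-(c+1)+(i+1)) + ((M-(c+1)+(i+1)) + (N-i)) := by ring
                  _ = i*(M-(c+1)+(i+1)) + (M+N-c) := by rw [h2]
                  _ = (M+N-c) + i*(M-(c+1)+(i+1)) := by ring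
              have hcc : (c+1) - (i+1) = c - i := by omega
              rw [pascal N i, hcc,
                show X^((i+1)*(M-(c+1)+(i+1)))
                    * (qbin M (c-i) * (qbin N (i+1) + X^(N-i) * qbin N i))
                  = X^((i+1)*(M-(c+1)+(i+1))) * (qbin M (c-i) * qbin N (i+1))
                    + X^((i+1)*(M-(c+1)+(i+1)) + (N-i)) * (qbin M (c-i) * qbin N i) from by
                  rw [pow_add]; ring,
                hexp, pow_add]
              ring
            · rw [pascal N i, show qbin N i = 0 from qbin_of_gt hiN]
              ring
        _ = ((∑ i ∈ Finset.range (c+1), X^((i+1)*(M-(c+1)+(i+1)))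
                * (qbin M ((c+1)-(i+1)) * qbin N (i+1)))
              + X^(0*(M-(c+1)+0)) * (qbin M ((c+1)-0) * qbin N 0))
            + X^(M+N-c) * (∑ i ∈ Finset.range (c+1),
                X^(i*(M-c+i)) * (qbin M (c-i) * qbin N i)) := by
            rw [Finset.sum_add_distrib, Finset.mul_sum]; ring
        _ = qbin (M+N) (c+1) + X^(M+N-c) * qbin (M+N) c := by
            conv_rhs => rw [ih M (c+1) hc, ih M c (by omega)]
            rw [Finset.sum_range_succ'
              (fun j => X^(j*(M-(c+1)+j)) * (qbin M ((c+1)-j) * qbin N j)) (c+1)]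
        _ = qbin (M+(N+1)) (c+1) := by
            rw [show M+(N+1) = (M+N)+1 from by omega, pascal (M+N) c,
              show M+N-c = (M+N)-c from rfl]

/-! ### Congruence modulo `X^s` -/

def MOD (s : ℕ) (f g : QQ) : Prop := (X:QQ)^s ∣ (f - g)

lemma MOD.rfl {s : ℕ} {f : QQ} : MOD s f f := by
  show (X:QQ)^s ∣ (f - f); simp

lemma MOD.coeff {s : ℕ} {f g : QQ} (h : MOD s f g) {n : ℕ} (hn : n < s) :
    PowerSeries.coeff n f = PowerSeries.coeff n g := by
  have := (PowerSeries.X_pow_dvd_iff.mp h) n hn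
  rw [map_sub] at this
  linarith

lemma MOD.mono {s s' : ℕ} {f g : QQ} (h : MOD s f g) (hs : s' ≤ s) : MOD s' f g :=
  dvd_trans (pow_dvd_pow _ hs) h

lemma MOD.mul {s : ℕ} {f g f' g' : QQ} (h : MOD s f g) (h' : MOD s f' g') :
    MOD s (f * f') (g * g') := by
  show (X:QQ)^s ∣ _
  have e : f * f' - g * g' = (f - g) * f' + g * (f' - g') := by ring
  rw [e]
  exact dvd_add (Dvd.dvd.mul_right h f') (Dvd.dvd.mul_left h' g)

lemma MOD.symm {s : ℕ} {f g : QQ} (h : MOD s f g) : MOD s g f := by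
  show (X:QQ)^s ∣ _
  have e : g - f = -(f - g) := by ring
  rw [e]; exact dvd_neg.mpr h

lemma MOD.trans {s : ℕ} {f g h : QQ} (h1 : MOD s f g) (h2 : MOD s g h) : MOD s f h := by
  show (X:QQ)^s ∣ _
  have e : f - h = (f - g) + (g - h) := by ring
  rw [e]; exact dvd_add h1 h2

lemma MOD.inv {s : ℕ} {f g : QQ} (hf : cc f = 1) (hg : cc g = 1) (h : MOD s f g) :
    MOD s f⁻¹ g⁻¹ := by
  have hf1 : f * f⁻¹ = 1 := PowerSeries.mul_inv_cancel _ (by rw [hf]; norm_num)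
  have hg1 : g * g⁻¹ = 1 := PowerSeries.mul_inv_cancel _ (by rw [hg]; norm_num)
  have key : f⁻¹ - g⁻¹ = f⁻¹ * ((g - f) * g⁻¹) := by
    calc f⁻¹ - g⁻¹ = f⁻¹*(g*g⁻¹) - (f*f⁻¹)*g⁻¹ := by rw [hf1, hg1]; ring
      _ = f⁻¹ * ((g-f)*g⁻¹) := by ring
  show (X:QQ)^s ∣ _
  rw [key]
  exact Dvd.dvd.mul_left (Dvd.dvd.mul_right h.symm _) _

lemma MOD.xmul {s t : ℕ} {f g : QQ} (h : MOD s f g) :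
    MOD (t + s) ((X:QQ)^t * f) (X^t * g) := by
  show (X:QQ)^(t+s) ∣ _
  have e : X^t * f - X^t * g = X^t * (f - g) := by ring
  rw [e, pow_add]
  exact mul_dvd_mul_left _ h

/-- `∏_{i<b} (1 - X^(a+i+1)) ≡ 1 mod X^(a+1)` -/
lemma prod_mod (a b : ℕ) : MOD (a+1) (∏ i ∈ Finset.range b, (1 - (X:QQ)^(a+i+1))) 1 := by
  induction b with
  | zero => simpa using (MOD.rfl (s := a+1) (f := (1:QQ)))
  | succ b ih =>
    rw [Finset.prod_range_succ]
    have h2 : MOD (a+1) (1 - (X:QQ)^(a+b+1)) 1 := by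
      show (X:QQ)^(a+1) ∣ _
      rw [sub_sub_cancel_left, dvd_neg]
      exact pow_dvd_pow _ (by omega)
    simpa using ih.mul h2

lemma qp_add (a b : ℕ) : qp (a+b) = qp a * ∏ i ∈ Finset.range b, (1 - (X:QQ)^(a+i+1)) := by
  rw [qp, qp, Finset.prod_range_add]

lemma qp_mod (a b : ℕ) : MOD (a+1) (qp (a+b)) (qp a) := by
  rw [qp_add a b]
  have := (MOD.rfl (s := a+1) (f := qp a)).mul (prod_mod a b)
  simpa using this

lemma cc_qpInf : cc qpInf = 1 := by
  rw [qpInf, PowerSeries.constantCoeff_mk, qp_zero]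
  simp

lemma qpInf_mod (N : ℕ) : MOD (N+1) qpInf (qp N) := by
  show (X:QQ)^(N+1) ∣ _
  rw [PowerSeries.X_pow_dvd_iff]
  intro k hk
  rw [map_sub, qpInf, PowerSeries.coeff_mk]
  have := (qp_mod k (N - k)).coeff (n := k) (by omega)
  rw [show k + (N-k) = N from by omega] at this
  rw [this, sub_self]

lemma qp_mul_cc (a b : ℕ) : (qp a * qp b) * (qp a * qp b)⁻¹ = 1 :=
  PowerSeries.mul_inv_cancel _ (by rw [map_mul, cc_qp, cc_qp]; norm_num)

lemma qbin_big_mod (n r : ℕ) : MOD (n+1) (qbin ((n+r)+n) n) qpInf⁻¹ := by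
  have hle : n ≤ (n+r)+n := by omega
  have hsub : (n+r)+n-n = n+r := by omega
  have hform : qbin ((n+r)+n) n
      = (∏ i ∈ Finset.range (n+r), (1 - (X:QQ)^(n+i+1))) * (qp (n+r))⁻¹ := by
    refine cancel (qp_mul_cc n ((n+r)+n-n)) ?_
    rw [qbin_mul hle, hsub]
    rw [show ((∏ i ∈ Finset.range (n+r), (1 - (X:QQ)^(n+i+1))) * (qp (n+r))⁻¹)
          * (qp n * qp (n+r))
        = qp n * (∏ i ∈ Finset.range (n+r), (1 - (X:QQ)^(n+i+1)))
          * (qp (n+r) * (qp (n+r))⁻¹) from by ring, qp_mul_inv, mul_one,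
      ← qp_add n (n+r), add_comm n (n+r)]
  rw [hform]
  have hR := prod_mod n (n+r)
  have hI : MOD (n+1) (qp (n+r))⁻¹ qpInf⁻¹ :=
    (((qpInf_mod (n+r)).symm.inv (cc_qp _) cc_qpInf).mono (by omega))
  simpa using hR.mul hI

lemma term_mod (n r j : ℕ) (hj : j ≤ n) :
    MOD (n+1) (X^(j*((n+r)-n+j)) * (qbin (n+r) (n-j) * qbin n j))
              ((X:QQ)^(j*(j+r)) * (qp j * qp (j+r))⁻¹) := by
  have he : (n+r)-n+j = j+r := by omega
  rw [he]
  set R2 := ∏ i ∈ Finset.range (j+r), (1 - (X:QQ)^((n-j)+i+1)) with hR2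
  set R3 := ∏ i ∈ Finset.range j, (1 - (X:QQ)^((n-j)+i+1)) with hR3
  have h1 : qbin (n+r) (n-j) = R2 * (qp (j+r))⁻¹ := by
    have hle : n - j ≤ n + r := by omega
    have hsub : (n+r)-(n-j) = j+r := by omega
    refine cancel (qp_mul_cc (n-j) ((n+r)-(n-j))) ?_
    rw [qbin_mul hle, hsub]
    rw [show (R2 * (qp (j+r))⁻¹) * (qp (n-j) * qp (j+r))
        = qp (n-j) * R2 * (qp (j+r) * (qp (j+r))⁻¹) from by ring, qp_mul_inv, mul_one,
      ← qp_add (n-j) (j+r), show (n-j)+(j+r) = n+r from by omega]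
  have h2 : qbin n j = R3 * (qp j)⁻¹ := by
    have hsub : n - j = n - j := rfl
    refine cancel (qp_mul_cc j (n-j)) ?_
    rw [qbin_mul hj]
    rw [show (R3 * (qp j)⁻¹) * (qp j * qp (n-j))
        = qp (n-j) * R3 * (qp j * (qp j)⁻¹) from by ring, qp_mul_inv, mul_one,
      ← qp_add (n-j) j, show (n-j)+j = n from by omega]
  rw [h1, h2]
  have hm2 : MOD (n-j+1) (R2 * (qp (j+r))⁻¹) ((qp (j+r))⁻¹) := by
    simpa using (prod_mod (n-j) (j+r)).mul (MOD.rfl (f := (qp (j+r))⁻¹))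
  have hm3 : MOD (n-j+1) (R3 * (qp j)⁻¹) ((qp j)⁻¹) := by
    simpa using (prod_mod (n-j) j).mul (MOD.rfl (f := (qp j)⁻¹))
  have hmul : MOD (n-j+1) (R2 * (qp (j+r))⁻¹ * (R3 * (qp j)⁻¹))
      ((qp j * qp (j+r))⁻¹) := by
    rw [PowerSeries.mul_inv_rev]
    exact hm2.mul hm3
  have := hmul.xmul (t := j*(j+r))
  refine this.mono ?_
  have hjj : j ≤ j*(j+r) := by
    rcases Nat.eq_zero_or_pos j with rfl | hjpos
    · omega
    · calc j = j * 1 := by omega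
        _ ≤ j * (j+r) := Nat.mul_le_mul_left j (by omega)
  omega

/-- Durfee rectangle identity:
`1/(q;q)_∞ = Σ_{e≥0} q^(e(e+r)) / ((q;q)_e (q;q)_(e+r))`. -/
lemma durfee (r : ℕ) :
    qpInf⁻¹ = seriesSum (fun e => (X:QQ)^(e*(e+r)) * (qp e * qp (e+r))⁻¹) := by
  ext n
  rw [seriesSum, PowerSeries.coeff_mk]
  have hv := vandermonde n (n+r) n (by omega)
  calc PowerSeries.coeff n qpInf⁻¹
      = PowerSeries.coeff n (qbin ((n+r)+n) n) := ((qbin_big_mod n r).coeff (by omega)).symm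
    _ = PowerSeries.coeff n (∑ j ∈ Finset.range (n+1),
          X^(j*((n+r)-n+j)) * (qbin (n+r) (n-j) * qbin n j)) := by rw [hv]
    _ = ∑ j ∈ Finset.range (n+1), PowerSeries.coeff n
          (X^(j*((n+r)-n+j)) * (qbin (n+r) (n-j) * qbin n j)) := map_sum _ _ _
    _ = ∑ j ∈ Finset.range (n+1), PowerSeries.coeff n
          ((X:QQ)^(j*(j+r)) * (qp j * qp (j+r))⁻¹) := by
        refine Finset.sum_congr rfl fun j hj => ?_
        exact (term_mod n r j (by simpa using Nat.lt_succ_iff.mp (Finset.mem_range.mp hj))).coeff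
          (by omega)
    _ = PowerSeries.coeff n (∑ j ∈ Finset.range (n+1),
          (X:QQ)^(j*(j+r)) * (qp j * qp (j+r))⁻¹) := (map_sum _ _ _).symm

/-! ### seriesSum lemmas -/

lemma coeff_zero_of_dvd {f : QQ} {k n : ℕ} (h : (X:QQ)^k ∣ f) (hn : n < k) :
    PowerSeries.coeff n f = 0 :=
  PowerSeries.X_pow_dvd_iff.mp h n hn

lemma coeff_sum_ext {f : ℕ → QQ} {n a b : ℕ} (hab : a ≤ b)
    (h0 : ∀ d, a ≤ d → PowerSeries.coeff n (f d) = 0) :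
    PowerSeries.coeff n (∑ d ∈ Finset.range a, f d)
      = PowerSeries.coeff n (∑ d ∈ Finset.range b, f d) := by
  rw [Finset.range_eq_Ico, Finset.range_eq_Ico,
    ← Finset.sum_Ico_consecutive f (Nat.zero_le a) hab, map_add]
  have hz : PowerSeries.coeff n (∑ i ∈ Finset.Ico a b, f i) = 0 := by
    rw [map_sum]
    exact Finset.sum_eq_zero fun d hd => h0 d (Finset.mem_Ico.mp hd).1
  rw [hz, add_zero]

lemma seriesSum_coeff (f : ℕ → QQ) (n : ℕ) :
    PowerSeries.coeff n (seriesSum f)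
      = PowerSeries.coeff n (∑ d ∈ Finset.range (n+1), f d) := by
  rw [seriesSum, PowerSeries.coeff_mk]

lemma seriesSum_ext_coeff {f : ℕ → QQ} (hf : ∀ d, (X:QQ)^d ∣ f d) {n N : ℕ} (hN : n < N) :
    PowerSeries.coeff n (seriesSum f)
      = PowerSeries.coeff n (∑ d ∈ Finset.range N, f d) := by
  rw [seriesSum_coeff]
  exact coeff_sum_ext (by omega) fun d hd => coeff_zero_of_dvd (hf d) (by omega)

lemma seriesSum_add (f g : ℕ → QQ) :
    seriesSum (fun d => f d + g d) = seriesSum f + seriesSum g := by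
  ext n
  rw [map_add, seriesSum_coeff, seriesSum_coeff, seriesSum_coeff,
    Finset.sum_add_distrib, map_add]

lemma seriesSum_mul_left (c : QQ) {f : ℕ → QQ} (hf : ∀ d, (X:QQ)^d ∣ f d) :
    seriesSum (fun d => c * f d) = c * seriesSum f := by
  ext n
  rw [seriesSum_coeff, ← Finset.mul_sum, PowerSeries.coeff_mul, PowerSeries.coeff_mul]
  refine Finset.sum_congr rfl fun p hp => ?_
  have hp2 : p.2 ≤ n := by
    have := Finset.HasAntidiagonal.mem_antidiagonal.mp hp; omega
  congr 1
  exact (seriesSum_ext_coeff hf (n := p.2) (N := n+1) (by omega)).symm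

lemma seriesSum_succ {f : ℕ → QQ} (hf : ∀ d, (X:QQ)^d ∣ f d) :
    seriesSum f = f 0 + seriesSum (fun d => f (d+1)) := by
  ext n
  rw [map_add, seriesSum_coeff (fun d => f (d+1)),
    seriesSum_ext_coeff hf (n := n) (N := n+2) (by omega), Finset.sum_range_succ', map_add]
  ring

lemma seriesSum_shift {m : ℕ} (hm : 1 ≤ m) {v : ℕ → QQ}
    (hv : ∀ e, (X:QQ)^(e+m) ∣ v e) :
    seriesSum (fun d => if m ≤ d+1 then v (d+1-m) else 0) = seriesSum v := by
  have hv' : ∀ e, (X:QQ)^e ∣ v e := fun e =>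
    dvd_trans (pow_dvd_pow _ (by omega)) (hv e)
  have hF : ∀ d, (X:QQ)^d ∣ (if m ≤ d+1 then v (d+1-m) else 0) := by
    intro d
    split
    · exact dvd_trans (pow_dvd_pow _ (by omega)) (hv (d+1-m))
    · exact dvd_zero _
  ext n
  rcases lt_or_ge (n+1) m with hc | hc
  · -- all terms vanish on both sides at coefficient n
    rw [seriesSum_coeff, seriesSum_coeff, map_sum, map_sum,
      Finset.sum_eq_zero (fun d hd => by
        rw [if_neg (show ¬ m ≤ d + 1 from by simp only [Finset.mem_range] at hd; omega),
          map_zero]),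
      Finset.sum_eq_zero (fun e he => coeff_zero_of_dvd (hv e) (by omega))]
  · rw [seriesSum_coeff, show n+1 = (m-1)+(n+2-m) from by omega, Finset.sum_range_add,
      map_add,
      map_sum (PowerSeries.coeff n) (fun d => if m ≤ d+1 then v (d+1-m) else 0)
        (Finset.range (m-1)),
      Finset.sum_eq_zero (fun d hd => by
        rw [if_neg (show ¬ m ≤ d + 1 from by simp only [Finset.mem_range] at hd; omega),
          map_zero]),
      zero_add,
      Finset.sum_congr rfl (fun i (_ : i ∈ Finset.range (n+2-m)) => by
        rw [if_pos (show m ≤ (m-1)+i+1 from by omega),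
          show (m-1)+i+1-m = i from by omega]),
      seriesSum_coeff]
    exact coeff_sum_ext (by omega) fun d hd => coeff_zero_of_dvd (hv d) (by omega)

/-! ### The summand of the truncated pentagonal theorem -/

/-- The summand (as a function of the actual index `D = d+1`). -/
noncomputable def t (m D : ℕ) : QQ :=
  X ^ (D ^ 2 + D + m.choose 2) * (qp (2 * D))⁻¹ * (1 - X ^ m) * (1 - X ^ D)⁻¹
    * qbin (2 * D) (D + m)

lemma cc_osp {D : ℕ} (hD : 1 ≤ D) : cc (1 - (X:QQ)^D) = 1 := by
  rw [show D = (D-1)+1 from by omega]; exact cc_one_sub_pow _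

lemma osp_cancel {D : ℕ} (hD : 1 ≤ D) : (1 - (X:QQ)^D) * (1 - (X:QQ)^D)⁻¹ = 1 :=
  PowerSeries.mul_inv_cancel _ (by rw [cc_osp hD]; norm_num)

lemma t_zero (m D : ℕ) (hD : D < m) : t m D = 0 := by
  rw [t, qbin_of_gt (by omega), mul_zero]

lemma t_norm {m D : ℕ} (hm : 1 ≤ m) (hD : m ≤ D) :
    t m D = X ^ (D ^ 2 + D + m.choose 2) * (1 - X ^ m)
      * ((1 - X ^ D) * (qp (D + m) * qp (D - m)))⁻¹ := by
  have hD1 : 1 ≤ D := le_trans hm hD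
  have hq : qbin (2*D) (D+m) = qp (2*D) * (qp (D+m) * qp (D-m))⁻¹ := by
    rw [qbin_of_le (by omega), show 2*D - (D+m) = D - m from by omega]
  rw [t, hq, PowerSeries.mul_inv_rev (1 - X^D)]
  rw [show X ^ (D^2+D+m.choose 2) * (qp (2*D))⁻¹ * (1-X^m) * (1-X^D)⁻¹
        * (qp (2*D) * (qp (D+m) * qp (D-m))⁻¹)
      = X ^ (D^2+D+m.choose 2) * (1-X^m) * ((qp (D+m) * qp (D-m))⁻¹ * (1-X^D)⁻¹)
        * (qp (2*D) * (qp (2*D))⁻¹) from by ring, qp_mul_inv, mul_one]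

/-- Key termwise identity. -/
lemma step_term {m D : ℕ} (hm : 1 ≤ m) (hD : m ≤ D) :
    t m D + t (m+1) D = X ^ (D ^ 2 + D + m.choose 2) * (1 - X ^ (2*m+1))
      * (qp (D + m + 1) * qp (D - m))⁻¹ := by
  have hD1 : 1 ≤ D := le_trans hm hD
  have hch : (m+1).choose 2 = m.choose 2 + m := by
    simp [Nat.choose_succ_succ]; omega
  set u : QQ := (1 - X^D) * (qp (D+m+1) * qp (D-m)) with hu_def
  have hu : u * u⁻¹ = 1 := PowerSeries.mul_inv_cancel _ (by
    rw [hu_def, map_mul, map_mul, cc_osp hD1, cc_qp, cc_qp]; norm_num)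
  refine cancel hu ?_
  have hC : (X ^ (D^2+D+m.choose 2) * (1 - X^(2*m+1)) * (qp (D+m+1) * qp (D-m))⁻¹) * u
      = X ^ (D^2+D+m.choose 2) * (1 - X^(2*m+1)) * (1 - X^D) := by
    rw [hu_def, show X ^ (D^2+D+m.choose 2) * (1-X^(2*m+1)) * (qp (D+m+1) * qp (D-m))⁻¹
        * ((1 - X^D) * (qp (D+m+1) * qp (D-m)))
      = X ^ (D^2+D+m.choose 2) * (1-X^(2*m+1)) * (1 - X^D)
        * ((qp (D+m+1) * qp (D-m)) * (qp (D+m+1) * qp (D-m))⁻¹) from by ring,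
      qp_mul_cc, mul_one]
  rw [hC]
  rcases eq_or_lt_of_le hD with rfl | hDm
  · -- D = m
    rw [t_zero (m+1) m (by omega), add_zero, t_norm hm le_rfl, hu_def]
    have hVu : (1 - (X:QQ)^m) * (qp (m+m+1) * qp (m-m))
        = ((1-X^m) * (qp (m+m) * qp (m-m))) * (1 - X^(2*m+1)) := by
      rw [show m+m+1 = (m+m)+1 from rfl, qp_succ (m+m), show m+m = 2*m from by omega]
      ring
    rw [hVu, show X ^ (m^2+m+m.choose 2) * (1-X^m)
          * ((1-X^m) * (qp (m+m) * qp (m-m)))⁻¹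
          * ((1-X^m) * (qp (m+m) * qp (m-m)) * (1 - X^(2*m+1)))
        = X ^ (m^2+m+m.choose 2) * (1 - X^(2*m+1)) * (1-X^m)
          * (((1-X^m) * (qp (m+m) * qp (m-m)))
             * ((1-X^m) * (qp (m+m) * qp (m-m)))⁻¹) from by ring,
      PowerSeries.mul_inv_cancel _ (by
        rw [map_mul, map_mul, cc_osp hm, cc_qp, cc_qp]; norm_num), mul_one]
  · -- m < D
    have hDm1 : m + 1 ≤ D := hDm
    have hA : t m D * u = X ^ (D^2+D+m.choose 2) * ((1-X^m) * (1 - X^(D+m+1))) := by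
      rw [t_norm hm hD, hu_def]
      have hVu : (1 - (X:QQ)^D) * (qp (D+m+1) * qp (D-m))
          = ((1-X^D) * (qp (D+m) * qp (D-m))) * (1 - X^(D+m+1)) := by
        rw [show D+m+1 = (D+m)+1 from rfl, qp_succ (D+m)]; ring
      rw [hVu, show X ^ (D^2+D+m.choose 2) * (1-X^m)
            * ((1-X^D) * (qp (D+m) * qp (D-m)))⁻¹
            * ((1-X^D) * (qp (D+m) * qp (D-m)) * (1 - X^(D+m+1)))
          = X ^ (D^2+D+m.choose 2) * ((1-X^m) * (1 - X^(D+m+1)))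
            * (((1-X^D) * (qp (D+m) * qp (D-m)))
               * ((1-X^D) * (qp (D+m) * qp (D-m)))⁻¹) from by ring,
        PowerSeries.mul_inv_cancel _ (by
          rw [map_mul, map_mul, cc_osp hD1, cc_qp, cc_qp]; norm_num), mul_one]
    have hB : t (m+1) D * u
        = X ^ (D^2+D+m.choose 2) * (X^m * ((1-X^(m+1)) * (1 - X^(D-m)))) := by
      rw [t_norm (by omega) hDm1, hch,
        show D^2+D+(m.choose 2 + m) = D^2+D+m.choose 2 + m from by omega,
        pow_add (X:QQ) (D^2+D+m.choose 2) m, hu_def]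
      have hVu : (1 - (X:QQ)^D) * (qp (D+m+1) * qp (D-m))
          = ((1-X^D) * (qp (D+(m+1)) * qp (D-(m+1)))) * (1 - X^(D-m)) := by
        rw [show D-m = (D-(m+1))+1 from by omega, qp_succ (D-(m+1)),
          show (D-(m+1))+1 = D-m from by omega, show D+m+1 = D+(m+1) from by omega]
        ring
      rw [hVu, show X ^ (D^2+D+m.choose 2) * X^m * (1-X^(m+1))
            * ((1-X^D) * (qp (D+(m+1)) * qp (D-(m+1))))⁻¹
            * ((1-X^D) * (qp (D+(m+1)) * qp (D-(m+1))) * (1 - X^(D-m)))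
          = X ^ (D^2+D+m.choose 2) * (X^m * ((1-X^(m+1)) * (1 - X^(D-m))))
            * (((1-X^D) * (qp (D+(m+1)) * qp (D-(m+1))))
               * ((1-X^D) * (qp (D+(m+1)) * qp (D-(m+1))))⁻¹) from by ring,
        PowerSeries.mul_inv_cancel _ (by
          rw [map_mul, map_mul, cc_osp hD1, cc_qp, cc_qp]; norm_num), mul_one]
    rw [add_mul, hA, hB]
    have hx1 : (X:QQ)^m * X^(D-m) = X^D := by rw [← pow_add]; congr 1; omega
    have hx2 : (X:QQ)^m * X^(m+1) = X^(2*m+1) := by rw [← pow_add]; congr 1; omega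
    have hx3 : (X:QQ)^m * X^(m+1) * X^(D-m) = X^(D+m+1) := by
      rw [← pow_add, ← pow_add]; congr 1; omega
    have hx4 : (X:QQ)^m * X^(D+m+1) = X^(2*m+1) * X^D := by
      rw [← pow_add, ← pow_add]; congr 1; omega
    have key : (1-(X:QQ)^m) * (1 - X^(D+m+1)) + X^m * ((1-X^(m+1)) * (1 - X^(D-m)))
        = (1 - X^(2*m+1)) * (1-X^D) := by
      linear_combination hx3 - hx2 - hx1 + hx4
    calc (X:QQ) ^ (D^2+D+m.choose 2) * ((1-X^m) * (1 - X^(D+m+1)))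
          + X ^ (D^2+D+m.choose 2) * (X^m * ((1-X^(m+1)) * (1 - X^(D-m))))
        = (X:QQ) ^ (D^2+D+m.choose 2)
            * ((1-X^m) * (1 - X^(D+m+1)) + X^m * ((1-X^(m+1)) * (1 - X^(D-m)))) := by ring
      _ = (X:QQ) ^ (D^2+D+m.choose 2) * ((1 - X^(2*m+1)) * (1-X^D)) := by rw [key]
      _ = (X:QQ) ^ (D^2+D+m.choose 2) * (1 - X^(2*m+1)) * (1-X^D) := by ring

lemma pent_div (m : ℕ) : m*(3*m+1)/2 = m*m + m + m.choose 2 := by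
  rcases m with _ | mu
  · norm_num
  · obtain ⟨k, hk⟩ := Nat.even_mul_succ_self mu
    have hch : (mu+1).choose 2 = k := by
      rw [Nat.choose_two_right, show (mu+1) - 1 = mu from rfl,
        show (mu+1)*mu = 2*k from by rw [Nat.mul_comm]; omega]
      exact Nat.mul_div_cancel_left k (by norm_num)
    have hdiv : (mu+1)*(3*(mu+1)+1) = 2*((mu+1)*(mu+1) + (mu+1) + k) := by
      have expand : (mu+1)*(3*(mu+1)+1) = 2*((mu+1)*(mu+1)+(mu+1)) + mu*(mu+1) := by ring
      rw [expand, show mu*(mu+1) = 2*k from by omega]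
      ring
    rw [hdiv, Nat.mul_div_cancel_left _ (by norm_num : 0 < 2), hch]

lemma m_le_pent {m : ℕ} : m ≤ m*(3*m+1)/2 := by
  rw [pent_div]
  exact le_trans (Nat.le_add_left m (m*m)) (Nat.le_add_right _ _)

lemma e_le_sq (e r : ℕ) (hr : 1 ≤ r) : e ≤ e*(e+r) :=
  le_trans (le_of_eq (mul_one e).symm) (Nat.mul_le_mul_left e (by omega))

lemma w_dvd (r : ℕ) (hr : 1 ≤ r) (e : ℕ) :
    (X:QQ)^e ∣ X^(e*(e+r)) * (qp e * qp (e+r))⁻¹ :=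
  dvd_mul_of_dvd_left (pow_dvd_pow _ (e_le_sq e r hr)) _

lemma step_sum (m : ℕ) (hm : 1 ≤ m) :
    seriesSum (fun d => t m (d+1) + t (m+1) (d+1))
      = X^(m*(3*m+1)/2) * (1 - X^(2*m+1)) * qpInf⁻¹ := by
  have claim1 : (fun d => t m (d+1) + t (m+1) (d+1))
      = fun d => if m ≤ d+1 then
          (X^(m*(3*m+1)/2) * (1 - (X:QQ)^(2*m+1)))
            * (X^((d+1-m)*((d+1-m)+(2*m+1))) * (qp (d+1-m) * qp ((d+1-m)+(2*m+1)))⁻¹)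
        else 0 := by
    funext d
    by_cases hd : m ≤ d+1
    · rw [if_pos hd, step_term hm hd]
      have hE : (d+1)^2+(d+1)+m.choose 2 = m*(3*m+1)/2 + (d+1-m)*((d+1-m)+(2*m+1)) := by
        obtain ⟨a, ha⟩ : ∃ a, d+1 = a+m := ⟨d+1-m, by omega⟩
        rw [pent_div m, ha, show a+m-m = a from by omega]
        ring
      rw [hE, pow_add, show (d+1-m)+(2*m+1) = (d+1)+m+1 from by omega,
        mul_comm (qp ((d+1)+m+1)) (qp ((d+1)-m)),
        show (d+1)-m = d+1-m from rfl]
      ring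
    · rw [if_neg hd, t_zero _ _ (by omega), t_zero _ _ (by omega), add_zero]
  rw [claim1]
  have hv : ∀ e, (X:QQ)^(e+m) ∣
      (X^(m*(3*m+1)/2) * (1 - (X:QQ)^(2*m+1)))
        * (X^(e*(e+(2*m+1))) * (qp e * qp (e+(2*m+1)))⁻¹) := by
    intro e
    have h1 : e + m ≤ m*(3*m+1)/2 + e*(e+(2*m+1)) := by
      have := m_le_pent (m := m)
      have := e_le_sq e (2*m+1) (by omega)
      omega
    have heq : (X^(m*(3*m+1)/2) * (1 - (X:QQ)^(2*m+1)))
        * (X^(e*(e+(2*m+1))) * (qp e * qp (e+(2*m+1)))⁻¹)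
      = X^(m*(3*m+1)/2 + e*(e+(2*m+1)))
        * ((1 - (X:QQ)^(2*m+1)) * (qp e * qp (e+(2*m+1)))⁻¹) := by
      rw [pow_add]; ring
    rw [heq]
    exact dvd_mul_of_dvd_left (pow_dvd_pow _ h1) _
  rw [seriesSum_shift hm hv,
    seriesSum_mul_left (X^(m*(3*m+1)/2) * (1 - (X:QQ)^(2*m+1))) (w_dvd (2*m+1) (by omega)),
    ← durfee (2*m+1)]

lemma qp_one : qp 1 = 1 - X := by
  rw [show (1:ℕ) = 0+1 from rfl, qp_succ, qp_zero, one_mul, pow_one]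

lemma base_case : qpInf⁻¹ * (1 - X) = 1 + seriesSum (fun d => t 1 (d+1)) := by
  have hw := w_dvd 1 le_rfl
  have hveq : (fun d => t 1 (d+1))
      = fun d => (1 - X) * ((X:QQ)^((d+1)*((d+1)+1)) * (qp (d+1) * qp ((d+1)+1))⁻¹) := by
    funext d
    rw [t_norm le_rfl (by omega)]
    have hqD : qp (d+1) = qp d * (1 - X^(d+1)) := qp_succ d
    have hden : (1 - (X:QQ)^(d+1)) * (qp ((d+1)+1) * qp ((d+1)-1)) = qp (d+1) * qp ((d+1)+1) := by
      rw [show (d+1)-1 = d from rfl, hqD]; ring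
    rw [hden, show (d+1)^2+(d+1)+(Nat.choose 1 2) = (d+1)*((d+1)+1) from by
      rw [show Nat.choose 1 2 = 0 from rfl]; ring, pow_one]
    ring
  have hf : ∀ d, (X:QQ)^d ∣ (1 - X) * ((X:QQ)^(d*(d+1)) * (qp d * qp (d+1))⁻¹) :=
    fun d => Dvd.dvd.mul_left (hw d) _
  have hsucc := seriesSum_succ (f := fun d => (1 - X) * ((X:QQ)^(d*(d+1)) * (qp d * qp (d+1))⁻¹)) hf
  have hml := seriesSum_mul_left (1 - (X:QQ)) hw
  have h0 : (1 - (X:QQ)) * ((X:QQ)^(0*(0+1)) * (qp 0 * qp (0+1))⁻¹) = 1 := by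
    have hc : (1 - (X:QQ)) * (1 - X)⁻¹ = 1 := by
      have := osp_cancel (le_refl 1)
      rwa [pow_one] at this
    rw [show (0*(0+1) : ℕ) = 0 from rfl, pow_zero, qp_zero, qp_one, one_mul, one_mul]
    exact hc
  calc qpInf⁻¹ * (1 - X)
      = (1 - X) * seriesSum (fun e => (X:QQ)^(e*(e+1)) * (qp e * qp (e+1))⁻¹) := by
        rw [durfee 1]; ring
    _ = seriesSum (fun d => (1 - X) * ((X:QQ)^(d*(d+1)) * (qp d * qp (d+1))⁻¹)) := hml.symm
    _ = 1 + seriesSum (fun d => (1 - X) * ((X:QQ)^((d+1)*((d+1)+1)) * (qp (d+1) * qp ((d+1)+1))⁻¹)) := by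
        rw [hsucc]
        beta_reduce
        rw [h0]
    _ = 1 + seriesSum (fun d => t 1 (d+1)) := by rw [hveq]

lemma pow_neg_one_succ (m : ℕ) (hm : 1 ≤ m) : ((-1 : QQ))^m = -((-1 : QQ))^(m-1) := by
  conv_lhs => rw [show m = (m-1)+1 from by omega]
  rw [pow_succ]; ring

end AM

open AM

/-- For `m ≥ 1`:
`(1/(q;q)_∞) Σ_{l=0}^{m-1} (-1)^l q^{l(3l+1)/2}(1-q^{2l+1})
  = 1 + (-1)^{m-1} Σ_{d=1}^∞ q^{d²+d+C(m,2)}/(q;q)_{2d} · (1-q^m)/(1-q^d) · qbinom(2d,d+m)`. -/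
theorem stmt_9 (m : ℕ) (hm : 1 ≤ m) :
    qpInf⁻¹ * ∑ l ∈ Finset.range m,
        (-1 : PowerSeries ℚ) ^ l * PowerSeries.X ^ (l * (3 * l + 1) / 2)
          * (1 - PowerSeries.X ^ (2 * l + 1))
      = 1 + (-1 : PowerSeries ℚ) ^ (m - 1) *
          seriesSum (fun d =>
            PowerSeries.X ^ ((d + 1) ^ 2 + (d + 1) + m.choose 2) * (qp (2 * (d + 1)))⁻¹
              * (1 - PowerSeries.X ^ m) * (1 - PowerSeries.X ^ (d + 1))⁻¹
              * qbin (2 * (d + 1)) ((d + 1) + m)) := by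
  induction m, hm using Nat.le_induction with
  | base =>
    rw [Finset.sum_range_one]
    show qpInf⁻¹ * ((-1 : PowerSeries ℚ)^0 * PowerSeries.X ^ (0 * (3*0+1)/2)
        * (1 - PowerSeries.X ^ (2*0+1)))
      = 1 + (-1 : PowerSeries ℚ)^(1-1) * seriesSum (fun d => t 1 (d+1))
    norm_num
    exact base_case
  | succ m hm ih =>
    rw [Finset.sum_range_succ, mul_add, ih]
    have hstep : seriesSum (fun d => t m (d+1)) + seriesSum (fun d => t (m+1) (d+1))
        = PowerSeries.X^(m*(3*m+1)/2) * (1 - PowerSeries.X^(2*m+1)) * qpInf⁻¹ := by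
      rw [← seriesSum_add]
      exact step_sum m hm
    show 1 + (-1 : PowerSeries ℚ)^(m-1) * seriesSum (fun d => t m (d+1))
        + qpInf⁻¹ * ((-1 : PowerSeries ℚ)^m * PowerSeries.X ^ (m * (3*m+1)/2)
          * (1 - PowerSeries.X ^ (2*m+1)))
      = 1 + (-1 : PowerSeries ℚ)^(m+1-1) * seriesSum (fun d => t (m+1) (d+1))
    rw [show m+1-1 = m from by omega, pow_neg_one_succ m hm]
    linear_combination ((-1 : PowerSeries ℚ))^(m-1) * hstep
end
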